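/- Fix an integer β ≠ 0. There is a constant C > 0 (depending only on β) with the following property. Let n ≥ 1, let 0 < M and nM ≤ 1, let f be a real number with |f| ≤ M, and let X_1, …, X_n, e_1, …, e_n be random variables on a probability space with |X_t| ≤ M and |e_t| ≤ M almost surely, E[X_t] = μ for all t, E[X_t X_s] = γ_{|t−s|} for all t ≠ s, and E[e_t] = 0, E[e_t X_s] = 0 for all t, s, and E[e_t e_s] = 0 for t ≠ s. Define CE_n := (∏_{t=1}^n (1 + βX_t − f + e_t) − 1) − β(∏_{t=1}^n (1 + X_t) − 1). Then |E[CE_n] − (−nf + ∑_{k=1}^{n−1} (n−k)(β(β−1)γ_k − 2βfμ) + C(n,2)·f²)| ≤ C·n³M³. -/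

import Mathlib

open MeasureTheory Finset


-- from aux1.lean

/-- Integrability and integral bound for a finite product of bounded measurable functions. -/
lemma aux_int {Ω : Type} [MeasurableSpace Ω] (P : Measure Ω) [IsProbabilityMeasure P]
    {n : ℕ} (S : Finset (Fin n)) (Y : Fin n → Ω → ℝ) (K : ℝ)
    (hm : ∀ t, Measurable (Y t)) (hb : ∀ t, ∀ᵐ ω ∂P, |Y t ω| ≤ K) :
    Integrable (fun ω => ∏ t ∈ S, Y t ω) P ∧ |∫ ω, ∏ t ∈ S, Y t ω ∂P| ≤ K ^ S.card := by
  have hbb : ∀ᵐ ω ∂P, ∀ t, |Y t ω| ≤ K := ae_all_iff.mpr hb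
  have hbound : ∀ᵐ ω ∂P, ‖∏ t ∈ S, Y t ω‖ ≤ K ^ S.card := by
    filter_upwards [hbb] with ω hω
    rw [Real.norm_eq_abs, Finset.abs_prod]
    calc ∏ t ∈ S, |Y t ω| ≤ ∏ _t ∈ S, K :=
          Finset.prod_le_prod (fun t _ => abs_nonneg _) (fun t _ => hω t)
      _ = K ^ S.card := by rw [Finset.prod_const]
  have hmeas : Measurable (fun ω => ∏ t ∈ S, Y t ω) :=
    Finset.measurable_prod S (fun t _ => hm t)
  refine ⟨(integrable_const (K ^ S.card)).mono' hmeas.aestronglyMeasurable hbound, ?_⟩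
  have h2 := norm_integral_le_of_norm_le_const (μ := P) hbound
  simpa using h2

/-- Integrability of a single bounded measurable function. -/
lemma aux_int1 {Ω : Type} [MeasurableSpace Ω] (P : Measure Ω) [IsProbabilityMeasure P]
    (g : Ω → ℝ) (K : ℝ) (hm : Measurable g) (hb : ∀ᵐ ω ∂P, |g ω| ≤ K) :
    Integrable g P :=
  (integrable_const K).mono' hm.aestronglyMeasurable (by filter_upwards [hb] with ω h using h)

/-- Integrability of a product of two bounded measurable functions. -/
lemma aux_int2 {Ω : Type} [MeasurableSpace Ω] (P : Measure Ω) [IsProbabilityMeasure P]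
    (g h : Ω → ℝ) (K L : ℝ) (hK : 0 ≤ K) (hgm : Measurable g) (hhm : Measurable h)
    (hgb : ∀ᵐ ω ∂P, |g ω| ≤ K) (hhb : ∀ᵐ ω ∂P, |h ω| ≤ L) :
    Integrable (fun ω => g ω * h ω) P := by
  refine (integrable_const (K * L)).mono' (hgm.mul hhm).aestronglyMeasurable ?_
  filter_upwards [hgb, hhb] with ω h1 h2
  rw [Real.norm_eq_abs, abs_mul]
  exact mul_le_mul h1 h2 (abs_nonneg _) hK

-- from aux2.lean



/-- First moment of `Y t`. -/
lemma aux_first {Ω : Type} [MeasurableSpace Ω] (P : Measure Ω) [IsProbabilityMeasure P]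
    {n : ℕ} (X e : Fin n → Ω → ℝ) (b f μ M : ℝ)
    (hXm : ∀ t, Measurable (X t)) (hem : ∀ t, Measurable (e t))
    (hXb : ∀ t, ∀ᵐ ω ∂P, |X t ω| ≤ M) (heb : ∀ t, ∀ᵐ ω ∂P, |e t ω| ≤ M)
    (hXμ : ∀ t, ∫ ω, X t ω ∂P = μ) (he0 : ∀ t, ∫ ω, e t ω ∂P = 0) (t : Fin n) :
    ∫ ω, (b * X t ω - f + e t ω) ∂P = b * μ - f := by
  have hX : Integrable (X t) P := aux_int1 P _ M (hXm t) (hXb t)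
  have he : Integrable (e t) P := aux_int1 P _ M (hem t) (heb t)
  have h1 : Integrable (fun ω => b * X t ω - f) P := (hX.const_mul b).sub (integrable_const f)
  have h2 : Integrable (fun ω => b * X t ω) P := hX.const_mul b
  rw [integral_add h1 he, integral_sub h2 (integrable_const f), integral_const_mul, hXμ t, he0 t]
  simp

/-- Second moment of `Y t * Y s`, `t ≠ s`. -/
lemma aux_pair {Ω : Type} [MeasurableSpace Ω] (P : Measure Ω) [IsProbabilityMeasure P]
    {n : ℕ} (X e : Fin n → Ω → ℝ) (b f μ M : ℝ) (γts : ℝ) (hM : 0 ≤ M)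
    (hXm : ∀ t, Measurable (X t)) (hem : ∀ t, Measurable (e t))
    (hXb : ∀ t, ∀ᵐ ω ∂P, |X t ω| ≤ M) (heb : ∀ t, ∀ᵐ ω ∂P, |e t ω| ≤ M)
    (hXμ : ∀ t, ∫ ω, X t ω ∂P = μ) (he0 : ∀ t, ∫ ω, e t ω ∂P = 0)
    (t s : Fin n)
    (hXX : ∫ ω, X t ω * X s ω ∂P = γts)
    (heXt : ∫ ω, e s ω * X t ω ∂P = 0) (heXs : ∫ ω, e t ω * X s ω ∂P = 0)
    (hee : ∫ ω, e t ω * e s ω ∂P = 0) :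
    ∫ ω, (b * X t ω - f + e t ω) * (b * X s ω - f + e s ω) ∂P
      = b ^ 2 * γts - 2 * b * f * μ + f ^ 2 := by
  have hX : ∀ u, Integrable (X u) P := fun u => aux_int1 P _ M (hXm u) (hXb u)
  have he : ∀ u, Integrable (e u) P := fun u => aux_int1 P _ M (hem u) (heb u)
  have hXXi : Integrable (fun ω => X t ω * X s ω) P :=
    aux_int2 P _ _ M M hM (hXm t) (hXm s) (hXb t) (hXb s)
  have heXi : ∀ u v : Fin n, Integrable (fun ω => e u ω * X v ω) P := fun u v =>
    aux_int2 P _ _ M M hM (hem u) (hXm v) (heb u) (hXb v)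
  have heei : Integrable (fun ω => e t ω * e s ω) P :=
    aux_int2 P _ _ M M hM (hem t) (hem s) (heb t) (heb s)
  have key : (fun ω => (b * X t ω - f + e t ω) * (b * X s ω - f + e s ω))
      = fun ω => b ^ 2 * (X t ω * X s ω) +
          ((-(b * f)) * X t ω +
          ((-(b * f)) * X s ω +
          (b * (e s ω * X t ω) +
          (b * (e t ω * X s ω) +
          ((-f) * e t ω +
          ((-f) * e s ω +
          (e t ω * e s ω + f ^ 2))))))) := by
    funext ω; ring
  rw [key]
  have I8 : Integrable (fun ω => e t ω * e s ω + f ^ 2) P := heei.add (integrable_const _)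
  have I7 : Integrable (fun ω => (-f) * e s ω + (e t ω * e s ω + f ^ 2)) P :=
    ((he s).const_mul _).add I8
  have I6 : Integrable (fun ω => (-f) * e t ω + ((-f) * e s ω + (e t ω * e s ω + f ^ 2))) P :=
    ((he t).const_mul _).add I7
  have I5 : Integrable (fun ω => b * (e t ω * X s ω) + ((-f) * e t ω +
      ((-f) * e s ω + (e t ω * e s ω + f ^ 2)))) P := ((heXi t s).const_mul _).add I6
  have I4 : Integrable (fun ω => b * (e s ω * X t ω) + (b * (e t ω * X s ω) + ((-f) * e t ω +
      ((-f) * e s ω + (e t ω * e s ω + f ^ 2))))) P := ((heXi s t).const_mul _).add I5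
  have I3 : Integrable (fun ω => (-(b * f)) * X s ω + (b * (e s ω * X t ω) +
      (b * (e t ω * X s ω) + ((-f) * e t ω + ((-f) * e s ω + (e t ω * e s ω + f ^ 2)))))) P :=
    ((hX s).const_mul _).add I4
  have I2 : Integrable (fun ω => (-(b * f)) * X t ω + ((-(b * f)) * X s ω + (b * (e s ω * X t ω) +
      (b * (e t ω * X s ω) + ((-f) * e t ω + ((-f) * e s ω + (e t ω * e s ω + f ^ 2))))))) P :=
    ((hX t).const_mul _).add I3
  rw [integral_add (hXXi.const_mul _) I2, integral_add ((hX t).const_mul _) I3,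
    integral_add ((hX s).const_mul _) I4, integral_add ((heXi s t).const_mul _) I5,
    integral_add ((heXi t s).const_mul _) I6, integral_add ((he t).const_mul _) I7,
    integral_add ((he s).const_mul _) I8, integral_add heei (integrable_const _),
    integral_const_mul, integral_const_mul, integral_const_mul, integral_const_mul,
    integral_const_mul, integral_const_mul, integral_const_mul,
    hXX, hXμ t, hXμ s, heXt, heXs, hee, he0 t, he0 s, integral_const]
  simp; ring

-- from aux3.lean

/-- Number of ordered pairs `(t,s)` in `Fin n` with `t < s` and gap `k`. -/
lemma aux_card (n k : ℕ) (hn : 0 < n) (hk : 0 < k) :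
    (((univ ×ˢ univ : Finset (Fin n × Fin n)).filter
        (fun p => p.1 < p.2 ∧ (p.2 : ℕ) - (p.1 : ℕ) = k)).card) = n - k := by
  rw [← Finset.card_range (n - k)]
  refine Finset.card_nbij' (fun p => (p.1 : ℕ))
    (fun a => ((⟨a % n, Nat.mod_lt a hn⟩ : Fin n), (⟨(a + k) % n, Nat.mod_lt _ hn⟩ : Fin n)))
    ?_ ?_ ?_ ?_
  · intro p hp
    simp only [Finset.mem_coe, Finset.mem_filter, Finset.mem_product, Fin.lt_def] at hp
    simp only [Finset.mem_coe, Finset.mem_range]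
    omega
  · intro a ha
    simp only [Finset.mem_coe, Finset.mem_range] at ha
    have h1 : a % n = a := Nat.mod_eq_of_lt (by omega)
    have h2 : (a + k) % n = a + k := Nat.mod_eq_of_lt (by omega)
    simp only [Finset.mem_coe, Finset.mem_filter, Finset.mem_product, Finset.mem_univ, true_and, Fin.lt_def,
      Fin.val_mk, h1, h2]
    omega
  · intro p hp
    simp only [Finset.mem_coe, Finset.mem_filter, Finset.mem_product, Fin.lt_def] at hp
    have h1 : (p.1 : ℕ) % n = (p.1 : ℕ) := Nat.mod_eq_of_lt p.1.isLt
    have h2 : ((p.1 : ℕ) + k) % n = (p.1 : ℕ) + k := Nat.mod_eq_of_lt (by omega)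
    ext <;> simp [h1, h2] <;> omega
  · intro a ha
    simp only [Finset.mem_coe, Finset.mem_range] at ha
    simp [Nat.mod_eq_of_lt (show a < n by omega)]

/-- Sum over strictly-ordered pairs of a function of the gap. -/
lemma aux_comb (n : ℕ) (hn : 0 < n) (g : ℕ → ℝ) :
    ∑ p ∈ (univ ×ˢ univ : Finset (Fin n × Fin n)).filter (fun p => p.1 < p.2),
        g ((p.2 : ℕ) - (p.1 : ℕ))
      = ∑ k ∈ Icc 1 (n - 1), ((n - k : ℕ) : ℝ) * g k := by
  rw [← Finset.sum_fiberwise_of_maps_to (g := fun p : Fin n × Fin n => (p.2 : ℕ) - (p.1 : ℕ))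
      (t := Icc 1 (n - 1)) ?_ (fun p => g ((p.2 : ℕ) - (p.1 : ℕ)))]
  · refine Finset.sum_congr rfl fun k hk => ?_
    have : ∀ p ∈ ((univ ×ˢ univ : Finset (Fin n × Fin n)).filter (fun p => p.1 < p.2)).filter
        (fun p => (p.2 : ℕ) - (p.1 : ℕ) = k), g ((p.2 : ℕ) - (p.1 : ℕ)) = g k := by
      intro p hp
      simp only [Finset.mem_filter] at hp
      rw [hp.2]
    rw [Finset.sum_congr rfl this, Finset.sum_const, nsmul_eq_mul, Finset.filter_filter,
      aux_card n k hn (by simp only [Finset.mem_Icc] at hk; omega)]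
  · intro p hp
    simp only [Finset.mem_filter, Finset.mem_product, Fin.lt_def] at hp
    simp only [Finset.mem_Icc]
    omega

/-- Gauss-type identity. -/
lemma aux_gauss (n : ℕ) : ∑ k ∈ Icc 1 (n - 1), (n - k) = n.choose 2 := by
  rcases Nat.eq_zero_or_pos n with h | h
  · subst h; simp
  have h1 : ∑ k ∈ Icc 1 (n - 1), (n - k) = ∑ k ∈ Icc 1 (n - 1), k := by
    apply Finset.sum_nbij' (i := fun k => n - k) (j := fun k => n - k) <;>
      intro a ha <;> simp only [Finset.mem_Icc] at * <;> omega
  have h2 : ∑ k ∈ Icc 1 (n - 1), k = ∑ k ∈ range n, k := by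
    have : range n = insert 0 (Icc 1 (n - 1)) := by
      ext x; simp [Finset.mem_range, Finset.mem_insert, Finset.mem_Icc]; omega
    rw [this, Finset.sum_insert (by simp)]
    omega
  rw [h1, h2, Finset.sum_range_id, Nat.choose_two_right]

/-- Sum over 2-element subsets equals sum over ordered pairs. -/
lemma aux_p2 {n : ℕ} (hn : 0 < n) (F : Finset (Fin n) → ℝ) :
    ∑ S ∈ powersetCard 2 (univ : Finset (Fin n)), F S
      = ∑ p ∈ (univ ×ˢ univ : Finset (Fin n × Fin n)).filter (fun p => p.1 < p.2),
          F {p.1, p.2} := by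
  apply Finset.sum_nbij'
    (i := fun S => if h : S.Nonempty then ((S.min' h, S.max' h) : Fin n × Fin n)
      else (⟨0, hn⟩, ⟨0, hn⟩))
    (j := fun p => ({p.1, p.2} : Finset (Fin n)))
  · intro S hS
    rw [Finset.mem_powersetCard] at hS
    obtain ⟨a, b, hab, rfl⟩ := Finset.card_eq_two.mp hS.2
    have hne : ({a, b} : Finset (Fin n)).Nonempty := ⟨a, by simp⟩
    simp only [dif_pos hne, Finset.mem_filter, Finset.mem_product, Finset.mem_univ, true_and]
    exact Finset.min'_lt_max' _ (Finset.mem_insert_self a {b})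
      (by simp) hab
  · intro p hp
    simp only [Finset.mem_filter, Finset.mem_product] at hp
    rw [Finset.mem_powersetCard]
    exact ⟨Finset.subset_univ _, Finset.card_pair (ne_of_lt hp.2)⟩
  · intro S hS
    rw [Finset.mem_powersetCard] at hS
    have hne : S.Nonempty := Finset.card_pos.mp (by omega)
    simp only [dif_pos hne]
    have hlt : S.min' hne < S.max' hne := by
      obtain ⟨a, b, hab, rfl⟩ := Finset.card_eq_two.mp hS.2
      exact Finset.min'_lt_max' _ (Finset.mem_insert_self a {b}) (by simp) hab
    apply Finset.eq_of_subset_of_card_le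
    · intro x hx
      simp only [Finset.mem_insert, Finset.mem_singleton] at hx
      rcases hx with rfl | rfl
      · exact Finset.min'_mem _ _
      · exact Finset.max'_mem _ _
    · rw [hS.2, Finset.card_pair (ne_of_lt hlt)]
  · intro p hp
    simp only [Finset.mem_filter, Finset.mem_product] at hp
    have hne : ({p.1, p.2} : Finset (Fin n)).Nonempty := ⟨p.1, by simp⟩
    simp only [dif_pos hne]
    have h1 : ({p.1, p.2} : Finset (Fin n)).min' hne = p.1 := by
      apply le_antisymm (Finset.min'_le _ _ (by simp))
      apply Finset.le_min'
      intro y hy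
      simp only [Finset.mem_insert, Finset.mem_singleton] at hy
      rcases hy with rfl | rfl
      · exact le_refl _
      · exact le_of_lt hp.2
    have h2 : ({p.1, p.2} : Finset (Fin n)).max' hne = p.2 := by
      apply le_antisymm
      · apply Finset.max'_le
        intro y hy
        simp only [Finset.mem_insert, Finset.mem_singleton] at hy
        rcases hy with rfl | rfl
        · exact le_of_lt hp.2
        · exact le_refl _
      · exact Finset.le_max' _ _ (by simp)
    rw [h1, h2]
  · intro S hS
    rw [Finset.mem_powersetCard] at hS
    have hne : S.Nonempty := Finset.card_pos.mp (by omega)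
    simp only [dif_pos hne]
    congr 1
    have hlt : S.min' hne < S.max' hne := by
      obtain ⟨a, b, hab, rfl⟩ := Finset.card_eq_two.mp hS.2
      exact Finset.min'_lt_max' _ (Finset.mem_insert_self a {b}) (by simp) hab
    apply (Finset.eq_of_subset_of_card_le ?_ ?_).symm
    · intro x hx
      simp only [Finset.mem_insert, Finset.mem_singleton] at hx
      rcases hx with rfl | rfl
      · exact Finset.min'_mem _ _
      · exact Finset.max'_mem _ _
    · rw [hS.2, Finset.card_pair (ne_of_lt hlt)]

-- from aux4.lean


/-- Expansion of the expected product. -/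
lemma aux_expand {Ω : Type} [MeasurableSpace Ω] (P : Measure Ω) [IsProbabilityMeasure P]
    {n : ℕ} (Y : Fin n → Ω → ℝ) (K : ℝ)
    (hm : ∀ t, Measurable (Y t)) (hb : ∀ t, ∀ᵐ ω ∂P, |Y t ω| ≤ K) :
    ∫ ω, ∏ t, (1 + Y t ω) ∂P
      = ∑ k ∈ range (n + 1), ∑ S ∈ powersetCard k (univ : Finset (Fin n)),
          ∫ ω, ∏ t ∈ S, Y t ω ∂P := by
  have hpt : (fun ω => ∏ t, (1 + Y t ω))
      = fun ω => ∑ S ∈ (univ : Finset (Fin n)).powerset, ∏ t ∈ S, Y t ω := by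
    funext ω
    have h := Finset.prod_add (fun t => Y t ω) (fun _ => (1 : ℝ)) univ
    simp only [Finset.prod_const_one, mul_one] at h
    rw [← h]
    exact Finset.prod_congr rfl fun t _ => by ring
  rw [hpt, integral_finset_sum _ (fun S _ => (aux_int P S Y K hm hb).1)]
  rw [Finset.sum_powerset]
  simp

/-- Tail bound. -/
lemma aux_tail (n : ℕ) (B M : ℝ) (hB : 1 ≤ B) (hM : 0 ≤ M) (hnM : (n : ℝ) * M ≤ 1)
    (T : ℕ → ℝ) (hT : ∀ k, |T k| ≤ (n.choose k : ℝ) * (B * M) ^ k) :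
    |∑ k ∈ Ico 3 (n + 3), T k| ≤ Real.exp B * ((n : ℝ) ^ 3 * M ^ 3) := by
  have hB0 : (0:ℝ) ≤ B := by linarith
  have key : ∀ k ∈ Ico 3 (n + 3), |T k| ≤ (n : ℝ) ^ 3 * M ^ 3 * (B ^ k / (k.factorial : ℝ)) := by
    intro k hk
    rw [Finset.mem_Ico] at hk
    have hfac : (0:ℝ) < (k.factorial : ℝ) := by exact_mod_cast k.factorial_pos
    have hch : (n.choose k : ℝ) ≤ (n : ℝ) ^ k / (k.factorial : ℝ) := by
      rw [le_div_iff₀ hfac]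
      have h := Nat.descFactorial_le_pow n k
      rw [Nat.descFactorial_eq_factorial_mul_choose] at h
      calc (n.choose k : ℝ) * (k.factorial : ℝ) = ((k.factorial * n.choose k : ℕ) : ℝ) := by
            push_cast; ring
        _ ≤ ((n ^ k : ℕ) : ℝ) := by exact_mod_cast h
        _ = (n : ℝ) ^ k := by push_cast; ring
    calc |T k| ≤ (n.choose k : ℝ) * (B * M) ^ k := hT k
      _ ≤ ((n : ℝ) ^ k / (k.factorial : ℝ)) * (B * M) ^ k := by
          apply mul_le_mul_of_nonneg_right hch (by positivity)
      _ = ((n : ℝ) * M) ^ k * (B ^ k / (k.factorial : ℝ)) := by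
          rw [mul_pow, mul_pow]; ring
      _ ≤ ((n : ℝ) * M) ^ 3 * (B ^ k / (k.factorial : ℝ)) := by
          apply mul_le_mul_of_nonneg_right
            (pow_le_pow_of_le_one (by positivity) hnM hk.1) (by positivity)
      _ = (n : ℝ) ^ 3 * M ^ 3 * (B ^ k / (k.factorial : ℝ)) := by rw [mul_pow]
  calc |∑ k ∈ Ico 3 (n + 3), T k| ≤ ∑ k ∈ Ico 3 (n + 3), |T k| :=
        Finset.abs_sum_le_sum_abs _ _
    _ ≤ ∑ k ∈ Ico 3 (n + 3), (n : ℝ) ^ 3 * M ^ 3 * (B ^ k / (k.factorial : ℝ)) :=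
        Finset.sum_le_sum key
    _ = (n : ℝ) ^ 3 * M ^ 3 * ∑ k ∈ Ico 3 (n + 3), (B ^ k / (k.factorial : ℝ)) := by
        rw [Finset.mul_sum]
    _ ≤ (n : ℝ) ^ 3 * M ^ 3 * Real.exp B := by
        apply mul_le_mul_of_nonneg_left _ (by positivity)
        calc ∑ k ∈ Ico 3 (n + 3), (B ^ k / (k.factorial : ℝ))
            ≤ ∑ k ∈ range (n + 3), (B ^ k / (k.factorial : ℝ)) := by
              apply Finset.sum_le_sum_of_subset_of_nonneg
              · rw [Finset.range_eq_Ico]; exact Finset.Ico_subset_Ico (by omega) le_rfl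
              · intro k _ _; positivity
          _ ≤ Real.exp B := Real.sum_le_exp_of_nonneg hB0 _
    _ = Real.exp B * ((n : ℝ) ^ 3 * M ^ 3) := by ring

/-- Expected compounding effect approximation.  For a fixed nonzero integer
leverage ratio `β` there is a constant `C > 0` such that for any horizon `n ≥ 1`, bound
`M` with `0 < M` and `nM ≤ 1`, fee `|f| ≤ M`, and bounded returns/tracking errors with
the stated moment structure, the expected compounding effect differs from
`-nf + ∑_{k=1}^{n-1} (n-k)(β(β-1)γ_k - 2βfμ) + C(n,2) f²` by at most `C n³ M³`. -/
theorem stmt7 (β : ℤ) (hβ : β ≠ 0) :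
    ∃ C : ℝ, 0 < C ∧
      ∀ (Ω : Type) (_ : MeasurableSpace Ω) (P : Measure Ω), IsProbabilityMeasure P →
      ∀ (n : ℕ), 1 ≤ n →
      ∀ (M : ℝ), 0 < M → (n : ℝ) * M ≤ 1 →
      ∀ (f : ℝ), |f| ≤ M →
      ∀ (X e : Fin n → Ω → ℝ) (μ : ℝ) (γ : ℕ → ℝ),
      (∀ t, Measurable (X t)) → (∀ t, Measurable (e t)) →
      (∀ t, ∀ᵐ ω ∂P, |X t ω| ≤ M) → (∀ t, ∀ᵐ ω ∂P, |e t ω| ≤ M) →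
      (∀ t, ∫ ω, X t ω ∂P = μ) →
      (∀ t s : Fin n, t ≠ s →
        ∫ ω, X t ω * X s ω ∂P = γ (((t : ℤ) - (s : ℤ)).natAbs)) →
      (∀ t, ∫ ω, e t ω ∂P = 0) →
      (∀ t s : Fin n, ∫ ω, e t ω * X s ω ∂P = 0) →
      (∀ t s : Fin n, t ≠ s → ∫ ω, e t ω * e s ω ∂P = 0) →
      |(∫ ω, (((∏ t, (1 + (β : ℝ) * X t ω - f + e t ω)) - 1)
            - (β : ℝ) * ((∏ t, (1 + X t ω)) - 1)) ∂P)
          - (-(n : ℝ) * f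
            + (∑ k ∈ Finset.Icc 1 (n - 1),
                ((n : ℝ) - (k : ℝ)) * ((β : ℝ) * ((β : ℝ) - 1) * γ k - 2 * (β : ℝ) * f * μ))
            + (n.choose 2 : ℝ) * f ^ 2)|
        ≤ C * (n : ℝ) ^ 3 * M ^ 3 := by
  classical
  refine ⟨(|(β : ℝ)| + 1) * Real.exp (|(β : ℝ)| + 2), by positivity, ?_⟩
  intro Ω _inst P hP n hn M hM hnM f hf X e μ γ hXm hem hXb heb hXμ hXXm he0 heXm heem
  set b : ℝ := |(β : ℝ)| with hbdef
  have hb0 : (0:ℝ) ≤ b := abs_nonneg _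
  set B : ℝ := b + 2 with hBdef
  have hB1 : (1:ℝ) ≤ B := by rw [hBdef]; linarith
  have hn0 : 0 < n := hn
  set Y : Fin n → Ω → ℝ := fun t ω => (β : ℝ) * X t ω - f + e t ω with hYdef
  have hYm : ∀ t, Measurable (Y t) := fun t =>
    ((measurable_const.mul (hXm t)).sub measurable_const).add (hem t)
  have hYb : ∀ t, ∀ᵐ ω ∂P, |Y t ω| ≤ B * M := by
    intro t
    filter_upwards [hXb t, heb t] with ω h1 h2
    have h3 : |Y t ω| ≤ |(β:ℝ) * X t ω| + |f| + |e t ω| :=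
      calc |Y t ω| = |((β:ℝ) * X t ω - f) + e t ω| := rfl
        _ ≤ |(β:ℝ) * X t ω - f| + |e t ω| := abs_add_le _ _
        _ ≤ (|(β:ℝ) * X t ω| + |f|) + |e t ω| := by
            exact add_le_add_left (abs_sub _ _) _
    rw [abs_mul, ← hbdef] at h3
    have h4 : b * |X t ω| ≤ b * M := mul_le_mul_of_nonneg_left h1 hb0
    rw [hBdef]
    linarith
  have hXb' : ∀ t, ∀ᵐ ω ∂P, |X t ω| ≤ B * M := by
    intro t
    filter_upwards [hXb t] with ω h1
    nlinarith
  -- abbreviations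
  set A0Y := ∑ S ∈ powersetCard 0 (univ : Finset (Fin n)), ∫ ω, ∏ t ∈ S, Y t ω ∂P with hA0Y
  set A1Y := ∑ S ∈ powersetCard 1 (univ : Finset (Fin n)), ∫ ω, ∏ t ∈ S, Y t ω ∂P with hA1Y
  set A2Y := ∑ S ∈ powersetCard 2 (univ : Finset (Fin n)), ∫ ω, ∏ t ∈ S, Y t ω ∂P with hA2Y
  set A0X := ∑ S ∈ powersetCard 0 (univ : Finset (Fin n)), ∫ ω, ∏ t ∈ S, X t ω ∂P with hA0X
  set A1X := ∑ S ∈ powersetCard 1 (univ : Finset (Fin n)), ∫ ω, ∏ t ∈ S, X t ω ∂P with hA1X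
  set A2X := ∑ S ∈ powersetCard 2 (univ : Finset (Fin n)), ∫ ω, ∏ t ∈ S, X t ω ∂P with hA2X
  set RY := ∑ k ∈ Ico 3 (n+3), ∑ S ∈ powersetCard k (univ : Finset (Fin n)),
      ∫ ω, ∏ t ∈ S, Y t ω ∂P with hRY
  set RX := ∑ k ∈ Ico 3 (n+3), ∑ S ∈ powersetCard k (univ : Finset (Fin n)),
      ∫ ω, ∏ t ∈ S, X t ω ∂P with hRX
  -- generic splitting of the expansion
  have hsplitsum : ∀ T : ℕ → ℝ, (∀ k, n < k → T k = 0) →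
      ∑ k ∈ range (n+1), T k = T 0 + T 1 + T 2 + ∑ k ∈ Ico 3 (n+3), T k := by
    intro T hT
    have h1 : ∑ k ∈ range (n+1), T k = ∑ k ∈ range (n+3), T k := by
      apply Finset.sum_subset
      · intro x hx; simp only [Finset.mem_range] at *; omega
      · intro x hx hx'
        simp only [Finset.mem_range] at hx hx'
        exact hT x (by omega)
    have h2 : ∑ k ∈ Ico 0 3, T k + ∑ k ∈ Ico 3 (n+3), T k = ∑ k ∈ Ico 0 (n+3), T k :=
      Finset.sum_Ico_consecutive T (by omega) (by omega)
    have h3 : ∑ k ∈ Ico 0 3, T k = T 0 + T 1 + T 2 := by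
      rw [← Finset.range_eq_Ico]
      simp [Finset.sum_range_succ]
    rw [h1, Finset.range_eq_Ico, ← h2, h3]
  have hTzero : ∀ (Z : Fin n → Ω → ℝ) (k : ℕ), n < k →
      ∑ S ∈ powersetCard k (univ : Finset (Fin n)), ∫ ω, ∏ t ∈ S, Z t ω ∂P = 0 := by
    intro Z k hk
    rw [Finset.powersetCard_eq_empty.mpr (by simpa using hk), Finset.sum_empty]
  have hEY : ∫ ω, ∏ t, (1 + Y t ω) ∂P = A0Y + A1Y + A2Y + RY := by
    rw [aux_expand P Y (B*M) hYm hYb, hA0Y, hA1Y, hA2Y, hRY]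
    exact hsplitsum _ (fun k hk => hTzero Y k hk)
  have hEX : ∫ ω, ∏ t, (1 + X t ω) ∂P = A0X + A1X + A2X + RX := by
    rw [aux_expand P X (B*M) hXm hXb', hA0X, hA1X, hA2X, hRX]
    exact hsplitsum _ (fun k hk => hTzero X k hk)
  -- zeroth and first order terms
  have hA0Yv : A0Y = 1 := by
    rw [hA0Y, Finset.powersetCard_zero, Finset.sum_singleton]
    simp
  have hA0Xv : A0X = 1 := by
    rw [hA0X, Finset.powersetCard_zero, Finset.sum_singleton]
    simp
  have hA1Yv : A1Y = (n:ℝ) * ((β:ℝ) * μ - f) := by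
    rw [hA1Y]
    simp only [Finset.powersetCard_one, Finset.sum_map, Function.Embedding.coeFn_mk,
      Finset.prod_singleton]
    have hint : ∀ t : Fin n, ∫ ω, Y t ω ∂P = (β:ℝ) * μ - f := fun t => by
      simp only [hYdef]
      exact aux_first P X e (β:ℝ) f μ M hXm hem hXb heb hXμ he0 t
    rw [Finset.sum_congr rfl (fun t (_ : t ∈ univ) => hint t), Finset.sum_const,
      Finset.card_univ, Fintype.card_fin, nsmul_eq_mul]
  have hA1Xv : A1X = (n:ℝ) * μ := by
    rw [hA1X]
    simp only [Finset.powersetCard_one, Finset.sum_map, Function.Embedding.coeFn_mk,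
      Finset.prod_singleton]
    rw [Finset.sum_congr rfl (fun t (_ : t ∈ univ) => hXμ t), Finset.sum_const,
      Finset.card_univ, Fintype.card_fin, nsmul_eq_mul]
  -- second order terms
  have hne : ∀ p : Fin n × Fin n,
      p ∈ (univ ×ˢ univ : Finset (Fin n × Fin n)).filter (fun p => p.1 < p.2) → p.1 ≠ p.2 := by
    intro p hp
    simp only [Finset.mem_filter, Finset.mem_product] at hp
    exact ne_of_lt hp.2
  have hd : ∀ p : Fin n × Fin n,
      p ∈ (univ ×ˢ univ : Finset (Fin n × Fin n)).filter (fun p => p.1 < p.2) →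
      (((p.1 : ℤ) - (p.2 : ℤ)).natAbs) = (p.2 : ℕ) - (p.1 : ℕ) := by
    intro p hp
    simp only [Finset.mem_filter, Finset.mem_product, Fin.lt_def] at hp
    have h1 : ((p.1 : Fin n) : ℤ) = ((p.1 : ℕ) : ℤ) := rfl
    have h2 : ((p.2 : Fin n) : ℤ) = ((p.2 : ℕ) : ℤ) := rfl
    rw [h1, h2]
    omega
  have hYY : ∀ p : Fin n × Fin n,
      p ∈ (univ ×ˢ univ : Finset (Fin n × Fin n)).filter (fun p => p.1 < p.2) →
      ∫ ω, Y p.1 ω * Y p.2 ω ∂P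
        = (β:ℝ)^2 * γ ((p.2 : ℕ) - (p.1 : ℕ)) - 2*(β:ℝ)*f*μ + f^2 := by
    intro p hp
    have hXXv : ∫ ω, X p.1 ω * X p.2 ω ∂P = γ ((p.2 : ℕ) - (p.1 : ℕ)) := by
      rw [hXXm p.1 p.2 (hne p hp), hd p hp]
    simp only [hYdef]
    exact aux_pair P X e (β:ℝ) f μ M (γ ((p.2 : ℕ) - (p.1 : ℕ))) hM.le hXm hem hXb heb hXμ he0
      p.1 p.2 hXXv (heXm p.2 p.1) (heXm p.1 p.2) (heem p.1 p.2 (hne p hp))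
  have hXXp : ∀ p : Fin n × Fin n,
      p ∈ (univ ×ˢ univ : Finset (Fin n × Fin n)).filter (fun p => p.1 < p.2) →
      ∫ ω, X p.1 ω * X p.2 ω ∂P = γ ((p.2 : ℕ) - (p.1 : ℕ)) := by
    intro p hp
    rw [hXXm p.1 p.2 (hne p hp), hd p hp]
  have hA2Yv : A2Y = ∑ p ∈ (univ ×ˢ univ : Finset (Fin n × Fin n)).filter (fun p => p.1 < p.2),
      ∫ ω, Y p.1 ω * Y p.2 ω ∂P := by
    rw [hA2Y, aux_p2 hn0 (fun S => ∫ ω, ∏ t ∈ S, Y t ω ∂P)]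
    refine Finset.sum_congr rfl fun p hp => ?_
    have hpp : (fun ω => ∏ t ∈ ({p.1, p.2} : Finset (Fin n)), Y t ω)
        = fun ω => Y p.1 ω * Y p.2 ω := funext fun ω => Finset.prod_pair (hne p hp)
    rw [hpp]
  have hA2Xv : A2X = ∑ p ∈ (univ ×ˢ univ : Finset (Fin n × Fin n)).filter (fun p => p.1 < p.2),
      ∫ ω, X p.1 ω * X p.2 ω ∂P := by
    rw [hA2X, aux_p2 hn0 (fun S => ∫ ω, ∏ t ∈ S, X t ω ∂P)]
    refine Finset.sum_congr rfl fun p hp => ?_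
    have hpp : (fun ω => ∏ t ∈ ({p.1, p.2} : Finset (Fin n)), X t ω)
        = fun ω => X p.1 ω * X p.2 ω := funext fun ω => Finset.prod_pair (hne p hp)
    rw [hpp]
  have h22 : A2Y - (β:ℝ) * A2X
      = (∑ k ∈ Finset.Icc 1 (n - 1),
          ((n : ℝ) - (k : ℝ)) * ((β : ℝ) * ((β : ℝ) - 1) * γ k - 2 * (β : ℝ) * f * μ))
        + (n.choose 2 : ℝ) * f ^ 2 := by
    rw [hA2Yv, hA2Xv, Finset.mul_sum, ← Finset.sum_sub_distrib]
    have hterm : ∀ p : Fin n × Fin n,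
        p ∈ (univ ×ˢ univ : Finset (Fin n × Fin n)).filter (fun p => p.1 < p.2) →
        (∫ ω, Y p.1 ω * Y p.2 ω ∂P) - (β:ℝ) * ∫ ω, X p.1 ω * X p.2 ω ∂P
          = ((β:ℝ) * ((β:ℝ) - 1) * γ ((p.2 : ℕ) - (p.1 : ℕ)) - 2*(β:ℝ)*f*μ + f^2) := by
      intro p hp
      rw [hYY p hp, hXXp p hp]
      ring
    rw [Finset.sum_congr rfl hterm, aux_comb n hn0
      (fun k => (β:ℝ) * ((β:ℝ) - 1) * γ k - 2*(β:ℝ)*f*μ + f^2)]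
    have hc : ∀ k ∈ Finset.Icc 1 (n-1), ((n-k : ℕ) : ℝ)
        * ((β:ℝ) * ((β:ℝ) - 1) * γ k - 2*(β:ℝ)*f*μ + f^2)
        = ((n:ℝ) - (k:ℝ)) * ((β:ℝ) * ((β:ℝ) - 1) * γ k - 2*(β:ℝ)*f*μ)
          + ((n-k : ℕ) : ℝ) * f^2 := by
      intro k hk
      rw [Finset.mem_Icc] at hk
      have hkn : k ≤ n := by omega
      rw [Nat.cast_sub hkn]
      ring
    rw [Finset.sum_congr rfl hc, Finset.sum_add_distrib, ← Finset.sum_mul]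
    congr 1
    rw [← Nat.cast_sum, aux_gauss n]
  -- integrability of full products and splitting of the target integral
  have hIPY : Integrable (fun ω => ∏ t, (1 + Y t ω)) P :=
    (aux_int P univ (fun t ω => 1 + Y t ω) (1 + B*M)
      (fun t => measurable_const.add (hYm t))
      (fun t => by
        filter_upwards [hYb t] with ω h
        calc |1 + Y t ω| ≤ |(1:ℝ)| + |Y t ω| := abs_add_le _ _
          _ ≤ 1 + B*M := by rw [abs_one]; linarith)).1
  have hIPX : Integrable (fun ω => ∏ t, (1 + X t ω)) P :=
    (aux_int P univ (fun t ω => 1 + X t ω) (1 + B*M)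
      (fun t => measurable_const.add (hXm t))
      (fun t => by
        filter_upwards [hXb' t] with ω h
        calc |1 + X t ω| ≤ |(1:ℝ)| + |X t ω| := abs_add_le _ _
          _ ≤ 1 + B*M := by rw [abs_one]; linarith)).1
  have hsplit : ∫ ω, (((∏ t, (1 + (β : ℝ) * X t ω - f + e t ω)) - 1)
        - (β : ℝ) * ((∏ t, (1 + X t ω)) - 1)) ∂P
      = (∫ ω, ∏ t, (1 + Y t ω) ∂P) - (β:ℝ) * (∫ ω, ∏ t, (1 + X t ω) ∂P) + ((β:ℝ) - 1) := by
    have hfun : (fun ω => (((∏ t, (1 + (β : ℝ) * X t ω - f + e t ω)) - 1)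
          - (β : ℝ) * ((∏ t, (1 + X t ω)) - 1)))
        = fun ω => ((∏ t, (1 + Y t ω)) - (β:ℝ) * (∏ t, (1 + X t ω))) + ((β:ℝ) - 1) := by
      funext ω
      have hpc : (∏ t, (1 + (β : ℝ) * X t ω - f + e t ω)) = ∏ t, (1 + Y t ω) :=
        Finset.prod_congr rfl fun t _ => by simp only [hYdef]; ring
      rw [hpc]; ring
    have hI1 : Integrable (fun ω => (β:ℝ) * ∏ t, (1 + X t ω)) P := hIPX.const_mul _
    have hI2 : Integrable (fun ω => (∏ t, (1 + Y t ω)) - (β:ℝ) * ∏ t, (1 + X t ω)) P :=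
      hIPY.sub hI1
    rw [hfun, integral_add hI2 (integrable_const _), integral_sub hIPY hI1,
      integral_const_mul, integral_const]
    simp
  -- tail bounds
  have hTbound : ∀ (Z : Fin n → Ω → ℝ), (∀ t, Measurable (Z t)) →
      (∀ t, ∀ᵐ ω ∂P, |Z t ω| ≤ B*M) → ∀ k : ℕ,
      |∑ S ∈ powersetCard k (univ : Finset (Fin n)), ∫ ω, ∏ t ∈ S, Z t ω ∂P|
        ≤ (n.choose k : ℝ) * (B*M)^k := by
    intro Z hZm hZb k
    calc |∑ S ∈ powersetCard k (univ : Finset (Fin n)), ∫ ω, ∏ t ∈ S, Z t ω ∂P|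
        ≤ ∑ S ∈ powersetCard k (univ : Finset (Fin n)), |∫ ω, ∏ t ∈ S, Z t ω ∂P| :=
          Finset.abs_sum_le_sum_abs _ _
      _ ≤ ∑ _S ∈ powersetCard k (univ : Finset (Fin n)), (B*M)^k := by
          refine Finset.sum_le_sum fun S hS => ?_
          have h := (aux_int P S Z (B*M) hZm hZb).2
          rwa [(Finset.mem_powersetCard.mp hS).2] at h
      _ = ((powersetCard k (univ : Finset (Fin n))).card : ℝ) * (B*M)^k := by
          rw [Finset.sum_const, nsmul_eq_mul]
      _ = (n.choose k : ℝ) * (B*M)^k := by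
          rw [Finset.card_powersetCard, Finset.card_univ, Fintype.card_fin]
  have hRYb : |RY| ≤ Real.exp B * ((n:ℝ)^3 * M^3) := by
    rw [hRY]
    exact aux_tail n B M hB1 hM.le hnM _ (hTbound Y hYm hYb)
  have hRXb : |RX| ≤ Real.exp B * ((n:ℝ)^3 * M^3) := by
    rw [hRX]
    exact aux_tail n B M hB1 hM.le hnM _ (hTbound X hXm hXb')
  -- final assembly
  rw [hsplit, hEY, hEX, hA0Yv, hA0Xv, hA1Yv, hA1Xv]
  have hkey : (1 + (n:ℝ) * ((β:ℝ) * μ - f) + A2Y + RY)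
        - (β:ℝ) * (1 + (n:ℝ) * μ + A2X + RX) + ((β:ℝ) - 1)
        - (-(n : ℝ) * f
          + (∑ k ∈ Finset.Icc 1 (n - 1),
              ((n : ℝ) - (k : ℝ)) * ((β : ℝ) * ((β : ℝ) - 1) * γ k - 2 * (β : ℝ) * f * μ))
          + (n.choose 2 : ℝ) * f ^ 2)
      = RY - (β:ℝ) * RX := by
    linear_combination h22
  rw [hkey]
  have habs : |RY - (β:ℝ) * RX| ≤ (b + 1) * Real.exp B * ((n:ℝ)^3 * M^3) := by
    calc |RY - (β:ℝ) * RX| ≤ |RY| + |(β:ℝ) * RX| := abs_sub _ _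
      _ = |RY| + b * |RX| := by rw [abs_mul, ← hbdef]
      _ ≤ Real.exp B * ((n:ℝ)^3 * M^3) + b * (Real.exp B * ((n:ℝ)^3 * M^3)) :=
          add_le_add hRYb (mul_le_mul_of_nonneg_left hRXb hb0)
      _ = (b + 1) * Real.exp B * ((n:ℝ)^3 * M^3) := by ring
  calc |RY - (β:ℝ) * RX| ≤ (b + 1) * Real.exp B * ((n:ℝ)^3 * M^3) := habs
    _ = (b + 1) * Real.exp (b + 2) * (n:ℝ)^3 * M^3 := by rw [← hBdef]; ring
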